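/- Let (Ω,σ) be a topological dynamical system and f a balanced coboundary: f = u∘σ - u with u continuous and ∫u dμ independent of the invariant probability measure μ. Then there exists a unique continuous u₀ with f = u₀∘σ - u₀ and ∫u₀ dμ = 0 for all invariant μ, and the discounted solutions U_ε[f] converge uniformly on Ω to u₀ as ε → 0. -/

import Mathlib

open MeasureTheory Filter Topology
open scoped ENNReal

set_option linter.unusedSectionVars false
set_option maxHeartbeats 1000000

noncomputable section

variable {Ω : Type*}

/-- `μ` is a `σ`-invariant Borel probability measure. -/
def IsInvProb [MeasurableSpace Ω] (σ : Ω → Ω) (μ : Measure Ω) : Prop :=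
  IsProbabilityMeasure μ ∧ Measure.map σ μ = μ

/-- The discounted solution `U_ε[f](ω) = -∑_{k≥0} (1-ε)^k f(σ^k ω)`. -/
def Udisc (σ : Ω → Ω) (f : Ω → ℝ) (ε : ℝ) (ω : Ω) : ℝ :=
  -∑' k : ℕ, (1 - ε) ^ k * f (σ^[k] ω)

/-- The discounted measure `μ_{ε,ω} = ∑_{k≥0} ε(1-ε)^k δ_{σ^k ω}`. -/
def discMeas [MeasurableSpace Ω] (σ : Ω → Ω) (ε : ℝ) (ω : Ω) : Measure Ω :=
  Measure.sum fun k : ℕ => ENNReal.ofReal (ε * (1 - ε) ^ k) • Measure.dirac (σ^[k] ω)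

/-- The empirical measure `A_{m,ω} = (1/m) ∑_{k=0}^{m-1} δ_{σ^k ω}`. -/
def empMeas [MeasurableSpace Ω] (σ : Ω → Ω) (m : ℕ) (ω : Ω) : Measure Ω :=
  ((m : ℝ≥0∞)⁻¹) • ∑ k ∈ Finset.range m, Measure.dirac (σ^[k] ω)

section Riesz


variable [MetricSpace Ω] [CompactSpace Ω]

def tset (Λ : C(Ω, ℝ) → ℝ) (K : Set Ω) : Set ℝ :=
  Λ '' {f : C(Ω, ℝ) | (∀ x, 0 ≤ f x) ∧ ∀ x ∈ K, 1 ≤ f x}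

def lam (Λ : C(Ω, ℝ) → ℝ) (K : Set Ω) : ℝ := sInf (tset Λ K)

variable {Λ : C(Ω, ℝ) → ℝ}
  (hadd : ∀ g h : C(Ω, ℝ), Λ (g + h) = Λ g + Λ h)
  (hpos : ∀ g : C(Ω, ℝ), (∀ x, 0 ≤ g x) → 0 ≤ Λ g)

section basic
include hadd hpos
theorem lam_mono' (g h : C(Ω, ℝ)) (hle : ∀ x, g x ≤ h x) : Λ g ≤ Λ h := by
  have : Λ h = Λ g + Λ (h - g) := by
    rw [← hadd]; congr 1; ext x; simp
  rw [this]
  have := hpos (h - g) (fun x => by simpa using sub_nonneg.2 (hle x))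
  linarith
end basic

include hadd in
theorem lam_zero : Λ 0 = 0 := by have := hadd 0 0; simpa using this.symm

include hadd in
theorem lam_sum {ι : Type*} (s : Finset ι) (g : ι → C(Ω, ℝ)) :
    Λ (∑ i ∈ s, g i) = ∑ i ∈ s, Λ (g i) := by
  classical
  induction s using Finset.induction_on with
  | empty => simpa using lam_zero hadd
  | insert _ _ hx ih => rw [Finset.sum_insert hx, Finset.sum_insert hx, hadd, ih]

theorem one_mem_tset (K : Set Ω) : Λ 1 ∈ tset Λ K :=
  ⟨1, ⟨fun x => by norm_num, fun x _ => by norm_num⟩, rfl⟩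

theorem tset_nonempty (K : Set Ω) : (tset Λ K).Nonempty := ⟨_, one_mem_tset K⟩

include hpos in
theorem tset_bddBelow (K : Set Ω) : BddBelow (tset Λ K) := by
  refine ⟨0, fun a ha => ?_⟩
  obtain ⟨f, hf, rfl⟩ := ha
  exact hpos f hf.1

include hpos in
theorem lam_nonneg (K : Set Ω) : 0 ≤ lam Λ K :=
  le_csInf (tset_nonempty K) (fun a ha => by obtain ⟨f, hf, rfl⟩ := ha; exact hpos f hf.1)

include hpos in
theorem lam_le {K : Set Ω} {f : C(Ω, ℝ)} (h0 : ∀ x, 0 ≤ f x) (h1 : ∀ x ∈ K, 1 ≤ f x) :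
    lam Λ K ≤ Λ f :=
  csInf_le (tset_bddBelow hpos K) ⟨f, ⟨h0, h1⟩, rfl⟩

theorem le_lam {K : Set Ω} {c : ℝ}
    (h : ∀ f : C(Ω, ℝ), (∀ x, 0 ≤ f x) → (∀ x ∈ K, 1 ≤ f x) → c ≤ Λ f) : c ≤ lam Λ K :=
  le_csInf (tset_nonempty K) (fun a ha => by obtain ⟨f, hf, rfl⟩ := ha; exact h f hf.1 hf.2)

include hpos in
theorem exists_lt_lam_add (K : Set Ω) {δ : ℝ} (hδ : 0 < δ) :
    ∃ f : C(Ω, ℝ), (∀ x, 0 ≤ f x) ∧ (∀ x ∈ K, 1 ≤ f x) ∧ Λ f < lam Λ K + δ := by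
  obtain ⟨a, ha, hlt⟩ := (csInf_lt_iff (tset_bddBelow hpos K) (tset_nonempty K)).1
    (lt_add_of_pos_right _ hδ)
  obtain ⟨f, hf, rfl⟩ := ha
  exact ⟨f, hf.1, hf.2, hlt⟩

include hpos in
theorem lam_mono {K₁ K₂ : Set Ω} (h : K₁ ⊆ K₂) : lam Λ K₁ ≤ lam Λ K₂ := by
  apply le_lam
  intro f h0 h1
  exact lam_le hpos h0 (fun x hx => h1 x (h hx))

include hadd hpos in
theorem lam_union_le (K₁ K₂ : Set Ω) : lam Λ (K₁ ∪ K₂) ≤ lam Λ K₁ + lam Λ K₂ := by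
  refine le_of_forall_pos_le_add (fun δ hδ => ?_)
  obtain ⟨f₁, hf₁0, hf₁1, hf₁⟩ := exists_lt_lam_add hpos K₁ (half_pos hδ)
  obtain ⟨f₂, hf₂0, hf₂1, hf₂⟩ := exists_lt_lam_add hpos K₂ (half_pos hδ)
  have : lam Λ (K₁ ∪ K₂) ≤ Λ (f₁ + f₂) := by
    apply lam_le hpos
    · intro x; have := hf₁0 x; have := hf₂0 x; simp; linarith
    · rintro x (hx | hx)
      · have := hf₁1 x hx; have := hf₂0 x; simp; linarith
      · have := hf₂1 x hx; have := hf₁0 x; simp; linarith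
  rw [hadd] at this
  linarith

include hadd hpos in
theorem lam_union_disjoint {K₁ K₂ : Set Ω} (hK₁ : IsClosed K₁) (hK₂ : IsClosed K₂)
    (hd : Disjoint K₁ K₂) : lam Λ (K₁ ∪ K₂) = lam Λ K₁ + lam Λ K₂ := by
  refine le_antisymm (lam_union_le hadd hpos K₁ K₂) ?_
  obtain ⟨h, h0, h1, h01⟩ := exists_continuous_zero_one_of_isClosed hK₂ hK₁ hd.symm
  apply le_lam
  intro f hf0 hf1
  have key : f * h + f * (1 - h) = f := by ext x; simp; ring
  have e1 : lam Λ K₁ ≤ Λ (f * h) := by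
    apply lam_le hpos
    · intro x; have := (h01 x).1; have := hf0 x; simp; positivity
    · intro x hx
      have hh : h x = 1 := h1 hx
      have := hf1 x (Or.inl hx)
      simp [hh]; linarith
  have e2 : lam Λ K₂ ≤ Λ (f * (1 - h)) := by
    apply lam_le hpos
    · intro x; have h2 := (h01 x).2; have h3 := hf0 x; simp; nlinarith
    · intro x hx
      have hx0 : h x = 0 := h0 hx
      have := hf1 x (Or.inr hx)
      simp [hx0]; linarith
  calc lam Λ K₁ + lam Λ K₂ ≤ Λ (f * h) + Λ (f * (1 - h)) := add_le_add e1 e2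
    _ = Λ f := by rw [← hadd, key]

/-- The Riesz content associated to a positive normalized functional. -/
def rieszCont (hadd : ∀ g h : C(Ω, ℝ), Λ (g + h) = Λ g + Λ h)
    (hpos : ∀ g : C(Ω, ℝ), (∀ x, 0 ≤ g x) → 0 ≤ Λ g) : Content Ω where
  toFun K := (lam Λ K.1).toNNReal
  mono' K₁ K₂ h := Real.toNNReal_mono (lam_mono hpos h)
  sup_disjoint' K₁ K₂ hd h₁ h₂ := by
    have hcar : (K₁ ⊔ K₂).carrier = (K₁ : Set Ω) ∪ (K₂ : Set Ω) := rfl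
    rw [hcar, lam_union_disjoint hadd hpos h₁ h₂ hd,
      Real.toNNReal_add (lam_nonneg hpos _) (lam_nonneg hpos _)]
    rfl
  sup_le' K₁ K₂ := by
    exact le_trans (Real.toNNReal_mono (lam_union_le hadd hpos _ _)) Real.toNNReal_add_le

variable [MeasurableSpace Ω] [BorelSpace Ω]

include hadd hpos in
theorem ofReal_lam_le_measure {K : Set Ω} (hK : IsCompact K) :
    ENNReal.ofReal (lam Λ K) ≤ (rieszCont hadd hpos).measure K := by
  have h1 := (rieszCont hadd hpos).le_outerMeasure_compacts ⟨K, hK⟩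
  rw [Content.measure_apply _ hK.isClosed.measurableSet]
  exact h1

include hadd hpos in
theorem rieszCont_measure_univ :
    (rieszCont hadd hpos).measure Set.univ = ENNReal.ofReal (Λ 1) := by
  rw [Content.measure_apply _ MeasurableSet.univ,
    Content.outerMeasure_of_isOpen _ _ isOpen_univ]
  have huniv : lam Λ (Set.univ : Set Ω) = Λ 1 := by
    refine le_antisymm (lam_le hpos (fun x => by norm_num) (fun x _ => by norm_num)) ?_
    exact le_lam (fun f h0 h1 => lam_mono' hadd hpos 1 f (fun x => h1 x (Set.mem_univ x)))
  refine le_antisymm ?_ ?_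
  · refine iSup₂_le (fun K hK => ?_)
    have := (rieszCont hadd hpos).mono K ⟨Set.univ, isCompact_univ⟩ (Set.subset_univ _)
    refine this.trans ?_
    show ((lam Λ (Set.univ : Set Ω)).toNNReal : ℝ≥0∞) ≤ _
    rw [huniv]
    rfl
  · refine le_trans ?_ ((rieszCont hadd hpos).le_innerContent ⟨Set.univ, isCompact_univ⟩
      ⟨Set.univ, isOpen_univ⟩ (Set.subset_univ _))
    show _ ≤ ((lam Λ (Set.univ : Set Ω)).toNNReal : ℝ≥0∞)
    rw [huniv]
    exact le_of_eq rfl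

include hadd hpos in
theorem rieszCont_isFiniteMeasure : IsFiniteMeasure ((rieszCont hadd hpos).measure) := by
  constructor
  rw [rieszCont_measure_univ hadd hpos]
  exact ENNReal.ofReal_lt_top

variable (hsmul : ∀ (c : ℝ) (g : C(Ω, ℝ)), Λ (c • g) = c * Λ g)

include hadd hpos hsmul in
theorem lam_le_integral_of_nonneg (f : C(Ω, ℝ)) (hf : ∀ x, 0 ≤ f x) :
    Λ f ≤ ∫ x, f x ∂(rieszCont hadd hpos).measure := by
  classical
  set μ := (rieszCont hadd hpos).measure with hμdef
  haveI : IsFiniteMeasure μ := rieszCont_isFiniteMeasure hadd hpos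
  have hfint : Integrable (fun x => f x) μ := by
    exact (BoundedContinuousFunction.mkOfCompact f).integrable (μ := μ)
  refine le_of_forall_pos_le_add (fun η hη => ?_)
  set B := Λ 1 with hBdef
  have hB : 0 ≤ B := hpos 1 (fun x => by norm_num)
  set δ : ℝ := η / (2 * (B + 1)) with hδdef
  have hδ : 0 < δ := by positivity
  set Cf : ℝ := ‖BoundedContinuousFunction.mkOfCompact f‖ with hCfdef
  have hfC : ∀ x, f x ≤ Cf := fun x => le_trans (le_abs_self _)
    (BoundedContinuousFunction.norm_coe_le_norm (BoundedContinuousFunction.mkOfCompact f) x)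
  set n : ℕ := ⌈Cf / δ⌉₊ with hndef
  set δ' : ℝ := η / (2 * (n * δ + 1)) with hδ'def
  have hδ' : 0 < δ' := by positivity
  set K : ℕ → Set Ω := fun i => {x | δ * i ≤ f x} with hKdef
  have hKc : ∀ i, IsCompact (K i) := fun i =>
    (isClosed_le continuous_const f.continuous).isCompact
  have hKm : ∀ i, MeasurableSet (K i) := fun i => (hKc i).isClosed.measurableSet
  have hreg : ∀ i : ℕ, ∃ g : C(Ω, ℝ), (∀ x, 0 ≤ g x) ∧ (∀ x, g x ≤ 1) ∧
      (∀ x ∈ K i, g x = 1) ∧ Λ g ≤ (μ (K i)).toReal + δ' := by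
    intro i
    obtain ⟨U, hKU, hUo, hUlt⟩ := Set.exists_isOpen_lt_add (K i) (measure_ne_top μ _)
      (ε := ENNReal.ofReal δ') (by simp [ENNReal.ofReal_eq_zero, not_le, hδ'])
    obtain ⟨V, hVo, hKV, hVU⟩ := normal_exists_closure_subset (hKc i).isClosed hUo hKU
    obtain ⟨g, hg0, hg1, hg01⟩ := exists_continuous_zero_one_of_isClosed
      hVo.isClosed_compl (hKc i).isClosed
      (Set.disjoint_left.2 fun x hxc hxK => hxc (hKV hxK))
    refine ⟨g, fun x => (hg01 x).1, fun x => (hg01 x).2, fun x hx => hg1 hx, ?_⟩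
    have h1 : Λ g ≤ lam Λ (closure V) := by
      apply le_lam
      intro h hh0 hh1
      refine lam_mono' hadd hpos g h (fun x => ?_)
      by_cases hx : x ∈ closure V
      · exact le_trans (hg01 x).2 (hh1 x hx)
      · rw [hg0 (fun hxV => hx (subset_closure hxV))]
        exact hh0 x
    have h2 : ENNReal.ofReal (lam Λ (closure V)) ≤ μ (closure V) :=
      ofReal_lam_le_measure hadd hpos isClosed_closure.isCompact
    have h4 : μ (closure V) ≤ μ (K i) + ENNReal.ofReal δ' :=
      le_trans (measure_mono hVU) hUlt.le
    have h5 : lam Λ (closure V) ≤ (μ (K i)).toReal + δ' := by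
      have h6 := le_trans h2 h4
      have h7 : ((μ (K i) + ENNReal.ofReal δ').toReal) = (μ (K i)).toReal + δ' := by
        rw [ENNReal.toReal_add (measure_ne_top μ _) ENNReal.ofReal_ne_top,
          ENNReal.toReal_ofReal hδ'.le]
      calc lam Λ (closure V) = (ENNReal.ofReal (lam Λ (closure V))).toReal := by
            rw [ENNReal.toReal_ofReal (lam_nonneg hpos _)]
        _ ≤ ((μ (K i) + ENNReal.ofReal δ').toReal) := ENNReal.toReal_mono
            (by finiteness) h6
        _ = _ := h7
    linarith
  choose g hg0 hg1 hgK hgΛ using hreg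
  have hfloor : ∀ x : Ω, (Finset.Icc 1 n).filter (fun i => x ∈ K i)
      = Finset.Icc 1 ⌊f x / δ⌋₊ := by
    intro x
    have hfl : ⌊f x / δ⌋₊ ≤ n := by
      refine le_trans (Nat.floor_le_floor ?_) (Nat.floor_le_ceil _)
      gcongr
      exact hfC x
    ext i
    simp only [Finset.mem_filter, Finset.mem_Icc, hKdef, Set.mem_setOf_eq]
    constructor
    · rintro ⟨⟨hi1, _⟩, hi3⟩
      refine ⟨hi1, Nat.le_floor ?_⟩
      rw [le_div_iff₀ hδ]
      linarith [hi3]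
    · rintro ⟨hi1, hi2⟩
      have h8 : (i : ℝ) ≤ f x / δ :=
        le_trans (Nat.cast_le.2 hi2) (Nat.floor_le (div_nonneg (hf x) hδ.le))
      rw [le_div_iff₀ hδ] at h8
      exact ⟨⟨hi1, le_trans hi2 hfl⟩, by linarith⟩
  have hS : ∀ x, (⌊f x / δ⌋₊ : ℝ) ≤ ∑ i ∈ Finset.Icc 1 n, g i x := by
    intro x
    have h1 : ∑ i ∈ (Finset.Icc 1 n).filter (fun i => x ∈ K i), g i x
        ≤ ∑ i ∈ Finset.Icc 1 n, g i x :=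
      Finset.sum_le_sum_of_subset_of_nonneg (Finset.filter_subset _ _)
        (fun i _ _ => hg0 i x)
    have h2 : ∑ i ∈ (Finset.Icc 1 n).filter (fun i => x ∈ K i), g i x
        = (((Finset.Icc 1 n).filter (fun i => x ∈ K i)).card : ℝ) := by
      rw [Finset.sum_congr rfl (fun i hi => hgK i x (Finset.mem_filter.1 hi).2)]
      simp
    rw [h2, hfloor x, Nat.card_Icc] at h1
    simpa using h1
  have hpt1 : ∀ x, f x ≤ δ + δ * ∑ i ∈ Finset.Icc 1 n, g i x := by
    intro x
    have h3 : f x / δ < ⌊f x / δ⌋₊ + 1 := Nat.lt_floor_add_one _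
    rw [div_lt_iff₀ hδ] at h3
    have h4 := hS x
    nlinarith [hδ]
  have hindsum : ∀ x, ∑ i ∈ Finset.Icc 1 n, (K i).indicator (fun _ => (1 : ℝ)) x
      = (⌊f x / δ⌋₊ : ℝ) := by
    intro x
    have : ∀ i, (K i).indicator (fun _ => (1 : ℝ)) x = if x ∈ K i then 1 else 0 :=
      fun i => Set.indicator_apply _ _ _
    rw [Finset.sum_congr rfl (fun i _ => this i), Finset.sum_boole, hfloor x, Nat.card_Icc]
    simp
  have hpt2 : ∀ x, δ * ∑ i ∈ Finset.Icc 1 n, (K i).indicator (fun _ => (1 : ℝ)) x ≤ f x := by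
    intro x
    rw [hindsum x]
    have h9 : (⌊f x / δ⌋₊ : ℝ) ≤ f x / δ := Nat.floor_le (div_nonneg (hf x) hδ.le)
    rw [le_div_iff₀ hδ] at h9
    linarith
  -- Λ side
  have hΛchain : Λ f ≤ δ * (B + ∑ i ∈ Finset.Icc 1 n, Λ (g i)) := by
    have h10 : Λ f ≤ Λ (δ • ((1 : C(Ω, ℝ)) + ∑ i ∈ Finset.Icc 1 n, g i)) := by
      refine lam_mono' hadd hpos _ _ (fun x => ?_)
      have := hpt1 x
      simpa [ContinuousMap.sum_apply] using this
    rw [hsmul, hadd, lam_sum hadd] at h10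
    exact h10
  have hΛg : ∑ i ∈ Finset.Icc 1 n, Λ (g i)
      ≤ (∑ i ∈ Finset.Icc 1 n, (μ (K i)).toReal) + n * δ' := by
    calc ∑ i ∈ Finset.Icc 1 n, Λ (g i)
        ≤ ∑ i ∈ Finset.Icc 1 n, ((μ (K i)).toReal + δ') :=
          Finset.sum_le_sum (fun i _ => hgΛ i)
      _ = (∑ i ∈ Finset.Icc 1 n, (μ (K i)).toReal) + n * δ' := by
          rw [Finset.sum_add_distrib, Finset.sum_const, Nat.card_Icc]
          simp [nsmul_eq_mul]
  -- integral side
  have hWint : Integrable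
      (fun x => ∑ i ∈ Finset.Icc 1 n, (K i).indicator (fun _ => (1 : ℝ)) x) μ :=
    integrable_finset_sum _ (fun i _ => (integrable_const (1 : ℝ)).indicator (hKm i))
  have hInt1 : ∫ x, (∑ i ∈ Finset.Icc 1 n, (K i).indicator (fun _ => (1 : ℝ)) x) ∂μ
      = ∑ i ∈ Finset.Icc 1 n, (μ (K i)).toReal := by
    rw [integral_finset_sum _ (fun i _ => (integrable_const (1 : ℝ)).indicator (hKm i))]
    refine Finset.sum_congr rfl (fun i _ => ?_)
    rw [integral_indicator_const (1 : ℝ) (hKm i)]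
    simp [measureReal_def]
  have hInt2 : δ * ∑ i ∈ Finset.Icc 1 n, (μ (K i)).toReal ≤ ∫ x, f x ∂μ := by
    have h11 := integral_mono (hWint.const_mul δ) hfint hpt2
    rwa [integral_const_mul, hInt1] at h11
  -- budget
  have e1 : δ * (2 * (B + 1)) = η := by
    rw [hδdef]; field_simp
  have e2 : δ' * (2 * ((n : ℝ) * δ + 1)) = η := by
    rw [hδ'def]; field_simp
  have hnδ : 0 ≤ (n : ℝ) * δ := by positivity
  calc Λ f ≤ δ * (B + ∑ i ∈ Finset.Icc 1 n, Λ (g i)) := hΛchain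
    _ ≤ δ * (B + ((∑ i ∈ Finset.Icc 1 n, (μ (K i)).toReal) + n * δ')) := by
        have := hΛg; nlinarith [hδ.le]
    _ = δ * B + δ * (n : ℝ) * δ' + δ * ∑ i ∈ Finset.Icc 1 n, (μ (K i)).toReal := by ring
    _ ≤ δ * B + δ * (n : ℝ) * δ' + ∫ x, f x ∂μ := by linarith [hInt2]
    _ ≤ ∫ x, f x ∂μ + η := by nlinarith [hδ.le, hδ'.le]

include hadd hpos hsmul in
theorem integral_rieszCont (f : C(Ω, ℝ)) :
    ∫ x, f x ∂(rieszCont hadd hpos).measure = Λ f := by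
  set μ := (rieszCont hadd hpos).measure with hμdef
  haveI : IsFiniteMeasure μ := rieszCont_isFiniteMeasure hadd hpos
  have hB : 0 ≤ Λ 1 := hpos 1 (fun x => by norm_num)
  have huniv : (μ Set.univ).toReal = Λ 1 := by
    rw [hμdef, rieszCont_measure_univ hadd hpos, ENNReal.toReal_ofReal hB]
  have hint : ∀ h : C(Ω, ℝ), Integrable (fun x => h x) μ := fun h => by
    exact (BoundedContinuousFunction.mkOfCompact h).integrable (μ := μ)
  set Cf : ℝ := ‖BoundedContinuousFunction.mkOfCompact f‖ with hCfdef
  have hfC : ∀ x, |f x| ≤ Cf := fun x =>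
    BoundedContinuousFunction.norm_coe_le_norm (BoundedContinuousFunction.mkOfCompact f) x
  have hints : ∀ h : C(Ω, ℝ), Integrable (fun x => Cf + h x) μ :=
    fun h => (integrable_const Cf).add (hint h)
  have h1 : Λ (Cf • 1 + f) ≤ ∫ x, (Cf • (1 : C(Ω, ℝ)) + f) x ∂μ := by
    refine lam_le_integral_of_nonneg hadd hpos hsmul _ (fun x => ?_)
    have := (abs_le.1 (hfC x)).1
    simp only [ContinuousMap.add_apply, ContinuousMap.smul_apply, ContinuousMap.one_apply,
      smul_eq_mul, mul_one]
    linarith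
  have h2 : Λ (Cf • 1 - f) ≤ ∫ x, (Cf • (1 : C(Ω, ℝ)) - f) x ∂μ := by
    refine lam_le_integral_of_nonneg hadd hpos hsmul _ (fun x => ?_)
    have := (abs_le.1 (hfC x)).2
    simp only [ContinuousMap.sub_apply, ContinuousMap.smul_apply, ContinuousMap.one_apply,
      smul_eq_mul, mul_one]
    linarith
  have e0 : ∫ x, (Cf • (1 : C(Ω, ℝ))) x ∂μ = Cf * Λ 1 := by
    simp only [ContinuousMap.smul_apply, ContinuousMap.one_apply, smul_eq_mul, mul_one]
    rw [integral_const, measureReal_def, huniv, smul_eq_mul]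
    ring
  have e1 : ∫ x, (Cf • (1 : C(Ω, ℝ)) + f) x ∂μ = Cf * Λ 1 + ∫ x, f x ∂μ := by
    simp only [ContinuousMap.add_apply]
    rw [integral_add ((hint _)) (hint f)]
    rw [← e0]
  have e2 : ∫ x, (Cf • (1 : C(Ω, ℝ)) - f) x ∂μ = Cf * Λ 1 - ∫ x, f x ∂μ := by
    simp only [ContinuousMap.sub_apply]
    rw [integral_sub ((hint _)) (hint f)]
    rw [← e0]
  have l1 : Λ (Cf • 1 + f) = Cf * Λ 1 + Λ f := by
    rw [hadd, hsmul]
  have l2 : Λ (Cf • 1 - f) = Cf * Λ 1 - Λ f := by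
    have : (Cf • (1 : C(Ω, ℝ)) - f) + f = Cf • 1 := by ring
    have h3 := hadd (Cf • 1 - f) f
    rw [this, hsmul] at h3
    linarith
  rw [e1, l1] at h1
  rw [e2, l2] at h2
  linarith

include hadd hpos hsmul in
theorem rieszRepr : ∃ μ : Measure Ω, μ Set.univ = ENNReal.ofReal (Λ 1) ∧
    ∀ f : C(Ω, ℝ), ∫ x, f x ∂μ = Λ f :=
  ⟨(rieszCont hadd hpos).measure, rieszCont_measure_univ hadd hpos,
    integral_rieszCont hadd hpos hsmul⟩

end Riesz

section Disc


theorem summable_geom_mul {r : ℝ} (hr0 : 0 ≤ r) (hr1 : r < 1) {a : ℕ → ℝ} {C : ℝ}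
    (hC : ∀ k, |a k| ≤ C) : Summable (fun k => r ^ k * a k) := by
  refine Summable.of_norm_bounded
    ((summable_geometric_of_lt_one hr0 hr1).mul_left C) (fun k => ?_)
  rw [norm_mul, Real.norm_eq_abs, Real.norm_eq_abs, abs_pow, abs_of_nonneg hr0, mul_comm]
  exact mul_le_mul_of_nonneg_right (hC k) (pow_nonneg hr0 k)

variable [MetricSpace Ω] [CompactSpace Ω]

theorem exists_abs_bound (g : Ω → ℝ) (hg : Continuous g) : ∃ C, 0 ≤ C ∧ ∀ x, |g x| ≤ C :=
  ⟨‖BoundedContinuousFunction.mkOfCompact ⟨g, hg⟩‖, norm_nonneg _, fun x => by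
    simpa [Real.norm_eq_abs] using BoundedContinuousFunction.norm_coe_le_norm
      (BoundedContinuousFunction.mkOfCompact ⟨g, hg⟩) x⟩

variable [MeasurableSpace Ω] [BorelSpace Ω]

theorem isProbabilityMeasure_discMeas (σ : Ω → Ω) {ε : ℝ} (hε : 0 < ε) (hε1 : ε < 1)
    (ω : Ω) : IsProbabilityMeasure (discMeas σ ε ω) := by
  have hr0 : (0:ℝ) ≤ 1 - ε := by linarith
  have hr1 : 1 - ε < 1 := by linarith
  constructor
  rw [discMeas, Measure.sum_apply _ MeasurableSet.univ]
  have h1 : ∀ k : ℕ, (ENNReal.ofReal (ε * (1 - ε) ^ k) • Measure.dirac (σ^[k] ω))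
      Set.univ = ENNReal.ofReal (ε * (1 - ε) ^ k) := by
    intro k
    rw [Measure.smul_apply, measure_univ, smul_eq_mul, mul_one]
  rw [tsum_congr h1]
  rw [← ENNReal.ofReal_tsum_of_nonneg
    (fun k => mul_nonneg hε.le (pow_nonneg hr0 k))
    ((summable_geometric_of_lt_one hr0 hr1).mul_left ε)]
  rw [tsum_mul_left, tsum_geometric_of_lt_one hr0 hr1]
  have : (1 : ℝ) - (1 - ε) = ε := by ring
  rw [this]
  rw [mul_inv_cancel₀ hε.ne']
  simp

theorem integral_discMeas (σ : Ω → Ω) {ε : ℝ} (hε : 0 < ε) (hε1 : ε < 1) (ω : Ω)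
    (g : Ω → ℝ) (hg : Continuous g) :
    ∫ x, g x ∂(discMeas σ ε ω) = ∑' k : ℕ, ε * (1 - ε) ^ k * g (σ^[k] ω) := by
  haveI := isProbabilityMeasure_discMeas σ hε hε1 ω
  have hint : Integrable g (discMeas σ ε ω) := by
    exact (BoundedContinuousFunction.mkOfCompact ⟨g, hg⟩).integrable
      (μ := discMeas σ ε ω)
  rw [discMeas] at hint ⊢
  rw [integral_sum_measure hint]
  refine tsum_congr (fun k => ?_)
  rw [integral_smul_measure, integral_dirac, ENNReal.toReal_ofReal
    (mul_nonneg hε.le (pow_nonneg (by linarith) k)), smul_eq_mul]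

theorem integral_discMeas_self (σ : Ω → Ω) {ε : ℝ} (hε : 0 < ε) (hε1 : ε < 1) (ω : Ω)
    (g : Ω → ℝ) (hg : Continuous g) (hinv : ∀ x, g (σ x) = g x) :
    ∫ x, g x ∂(discMeas σ ε ω) = g ω := by
  rw [integral_discMeas σ hε hε1 ω g hg]
  have hgk : ∀ k : ℕ, g (σ^[k] ω) = g ω := by
    intro k
    induction k with
    | zero => rfl
    | succ m ih => rw [Function.iterate_succ_apply', hinv, ih]
  have h1 : ∀ k : ℕ, ε * (1 - ε) ^ k * g (σ^[k] ω) = g ω * (ε * (1 - ε) ^ k) := by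
    intro k; rw [hgk k]; ring
  rw [tsum_congr h1, tsum_mul_left, tsum_mul_left, tsum_geometric_of_lt_one
    (by linarith) (by linarith)]
  have : (1 : ℝ) - (1 - ε) = ε := by ring
  rw [this, mul_inv_cancel₀ hε.ne']
  simp

theorem Udisc_eq_sub_integral (σ : Ω → Ω) {ε : ℝ} (hε : 0 < ε) (hε1 : ε < 1) (ω : Ω)
    (f u₀ : Ω → ℝ) (hu₀ : Continuous u₀) (hσ : Continuous σ)
    (hfu : ∀ x, f x = u₀ (σ x) - u₀ x) :
    Udisc σ f ε ω = u₀ ω - ∫ x, u₀ (σ x) ∂(discMeas σ ε ω) := by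
  obtain ⟨C, hC0, hC⟩ := exists_abs_bound u₀ hu₀
  have hr0 : (0:ℝ) ≤ 1 - ε := by linarith
  have hr1 : 1 - ε < 1 := by linarith
  set r := 1 - ε with hrdef
  set a : ℕ → ℝ := fun k => u₀ (σ^[k] ω) with hadef
  have hs0 : Summable (fun k => r ^ k * a k) := summable_geom_mul hr0 hr1 (fun k => hC _)
  have hs1 : Summable (fun k => r ^ k * a (k + 1)) := summable_geom_mul hr0 hr1 (fun k => hC _)
  have hstep : ∀ k : ℕ, f (σ^[k] ω) = a (k + 1) - a k := by
    intro k
    rw [hfu (σ^[k] ω), hadef]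
    simp [Function.iterate_succ_apply']
  have hU : Udisc σ f ε ω = -(∑' k, r ^ k * a (k + 1)) + ∑' k, r ^ k * a k := by
    rw [Udisc]
    have : ∀ k : ℕ, (1 - ε) ^ k * f (σ^[k] ω) = r ^ k * a (k + 1) - r ^ k * a k := by
      intro k; rw [hstep k, ← hrdef]; ring
    rw [tsum_congr this, Summable.tsum_sub hs1 hs0]
    ring
  have hshift : ∑' k, r ^ k * a k = a 0 + r * ∑' k, r ^ k * a (k + 1) := by
    rw [Summable.tsum_eq_zero_add hs0]
    congr 1
    · simp
    · rw [← tsum_mul_left]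
      refine tsum_congr (fun k => ?_)
      ring
  have hI : ∫ x, u₀ (σ x) ∂(discMeas σ ε ω) = ε * ∑' k, r ^ k * a (k + 1) := by
    rw [integral_discMeas σ hε hε1 ω (fun x => u₀ (σ x)) (by exact hu₀.comp hσ)]
    rw [← tsum_mul_left]
    refine tsum_congr (fun k => ?_)
    have : σ (σ^[k] ω) = σ^[k+1] ω := (Function.iterate_succ_apply' σ k ω).symm
    rw [this, ← hrdef, hadef]
    ring
  rw [hU, hshift, hI]
  have ha0 : a 0 = u₀ ω := rfl
  rw [ha0]
  ring

theorem integral_discMeas_comp (σ : Ω → Ω) {ε : ℝ} (hε : 0 < ε) (hε1 : ε < 1) (ω : Ω)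
    (g : Ω → ℝ) (hg : Continuous g) (hσ : Continuous σ) :
    ∫ x, g x ∂(discMeas σ ε ω)
      = ε * g ω + (1 - ε) * ∫ x, g (σ x) ∂(discMeas σ ε ω) := by
  obtain ⟨C, hC0, hC⟩ := exists_abs_bound g hg
  have hr0 : (0:ℝ) ≤ 1 - ε := by linarith
  have hr1 : 1 - ε < 1 := by linarith
  have hsum : Summable (fun k : ℕ => (1 - ε) ^ k * (ε * g (σ^[k] ω))) :=
    summable_geom_mul hr0 hr1 (C := ε * C)
      (fun k => by rw [abs_mul, abs_of_nonneg hε.le];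
                   exact mul_le_mul_of_nonneg_left (hC _) hε.le)
  rw [integral_discMeas σ hε hε1 ω g hg, integral_discMeas σ hε hε1 ω (fun x => g (σ x)) (by exact hg.comp hσ)]
  have hcong : ∀ k : ℕ, ε * (1 - ε) ^ k * g (σ^[k] ω)
      = (1 - ε) ^ k * (ε * g (σ^[k] ω)) := fun k => by ring
  rw [tsum_congr hcong, Summable.tsum_eq_zero_add hsum]
  have h0 : (1 - ε) ^ (0:ℕ) * (ε * g (σ^[0] ω)) = ε * g ω := by simp
  rw [h0]
  congr 1
  rw [← tsum_mul_left]
  refine tsum_congr (fun k => ?_)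
  rw [Function.iterate_succ_apply' σ k ω]
  ring

theorem key_invariant_limit (σ : Ω → Ω) (hσ : Continuous σ) (ε : ℕ → ℝ)
    (hε0 : ∀ n, 0 < ε n) (hε1 : ∀ n, ε n < 1) (hεlim : Tendsto ε atTop (𝓝 0)) (ω : ℕ → Ω) :
    ∃ (μ : Measure Ω) (U : Ultrafilter ℕ), IsInvProb σ μ ∧
      ∀ g : C(Ω, ℝ), Tendsto (fun n => ∫ x, g x ∂(discMeas σ (ε n) (ω n)))
        (U : Filter ℕ) (𝓝 (∫ x, g x ∂μ)) := by
  haveI : Nonempty Ω := ⟨ω 0⟩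
  set ν : ℕ → Measure Ω := fun n => discMeas σ (ε n) (ω n) with hν
  haveI hprob : ∀ n, IsProbabilityMeasure (ν n) :=
    fun n => isProbabilityMeasure_discMeas σ (hε0 n) (hε1 n) (ω n)
  set U : Ultrafilter ℕ := Ultrafilter.of atTop with hU
  have hUle : (U : Filter ℕ) ≤ atTop := Ultrafilter.of_le _
  have hIcc : ∀ g : C(Ω, ℝ), ∀ n, ∫ x, g x ∂(ν n) ∈
      Set.Icc (-‖BoundedContinuousFunction.mkOfCompact g‖)
        ‖BoundedContinuousFunction.mkOfCompact g‖ := by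
    intro g n
    have h1 := BoundedContinuousFunction.norm_integral_le_norm (μ := ν n)
      (BoundedContinuousFunction.mkOfCompact g)
    have h2 : |∫ x, g x ∂(ν n)| ≤ ‖BoundedContinuousFunction.mkOfCompact g‖ := by
      simpa [Real.norm_eq_abs] using h1
    exact Set.mem_Icc.2 ⟨by linarith [(abs_le.1 h2).1], (abs_le.1 h2).2⟩
  have hlim : ∀ g : C(Ω, ℝ), ∃ L : ℝ,
      Tendsto (fun n => ∫ x, g x ∂(ν n)) (U : Filter ℕ) (𝓝 L) := by
    intro g
    have hmem : ↑(Ultrafilter.map (fun n => ∫ x, g x ∂(ν n)) U)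
        ≤ Filter.principal (Set.Icc (-‖BoundedContinuousFunction.mkOfCompact g‖)
          ‖BoundedContinuousFunction.mkOfCompact g‖) := by
      rw [Ultrafilter.coe_map]
      exact le_principal_iff.2 (Filter.mem_map.2 (Filter.univ_mem' (fun n => hIcc g n)))
    obtain ⟨L, _, hL⟩ := (isCompact_Icc (a := -‖BoundedContinuousFunction.mkOfCompact g‖)
        (b := ‖BoundedContinuousFunction.mkOfCompact g‖)).ultrafilter_le_nhds
      (Ultrafilter.map (fun n => ∫ x, g x ∂(ν n)) U) hmem
    refine ⟨L, ?_⟩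
    have : Filter.map (fun n => ∫ x, g x ∂(ν n)) (U : Filter ℕ) ≤ 𝓝 L := by
      rw [← Ultrafilter.coe_map]; exact hL
    exact this
  choose Λ hΛ using hlim
  have hint : ∀ (n : ℕ) (g : C(Ω, ℝ)), Integrable (fun x => g x) (ν n) := fun n g => by
    exact (BoundedContinuousFunction.mkOfCompact g).integrable (μ := ν n)
  have hadd : ∀ g h : C(Ω, ℝ), Λ (g + h) = Λ g + Λ h := by
    intro g h
    have h1 : Tendsto (fun n => ∫ x, g x ∂(ν n) + ∫ x, h x ∂(ν n)) (U : Filter ℕ)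
        (𝓝 (Λ g + Λ h)) := (hΛ g).add (hΛ h)
    have h2 : (fun n => ∫ x, g x ∂(ν n) + ∫ x, h x ∂(ν n))
        = fun n => ∫ x, (g + h) x ∂(ν n) := by
      funext n
      rw [← integral_add (hint n g) (hint n h)]
      simp
    rw [h2] at h1
    exact tendsto_nhds_unique (hΛ (g + h)) h1
  have hsmul : ∀ (c : ℝ) (g : C(Ω, ℝ)), Λ (c • g) = c * Λ g := by
    intro c g
    have h1 : Tendsto (fun n => c * ∫ x, g x ∂(ν n)) (U : Filter ℕ) (𝓝 (c * Λ g)) :=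
      (hΛ g).const_mul c
    have h2 : (fun n => c * ∫ x, g x ∂(ν n)) = fun n => ∫ x, (c • g) x ∂(ν n) := by
      funext n
      rw [← integral_const_mul]
      simp
    rw [h2] at h1
    exact tendsto_nhds_unique (hΛ _) h1
  have hpos : ∀ g : C(Ω, ℝ), (∀ x, 0 ≤ g x) → 0 ≤ Λ g := fun g hg =>
    ge_of_tendsto (hΛ g) (Filter.Eventually.of_forall
      (fun n => integral_nonneg (fun x => hg x)))
  have hone : Λ 1 = 1 := by
    have h1 : (fun n => ∫ x, (1 : C(Ω, ℝ)) x ∂(ν n)) = fun _ => (1 : ℝ) := by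
      funext n; simp
    have h2 := hΛ 1
    rw [h1] at h2
    exact tendsto_nhds_unique h2 tendsto_const_nhds
  obtain ⟨μ, hμuniv, hμrepr⟩ := rieszRepr hadd hpos hsmul
  haveI hμprob : IsProbabilityMeasure μ := ⟨by rw [hμuniv, hone, ENNReal.ofReal_one]⟩
  have hinvΛ : ∀ g : C(Ω, ℝ), Λ (g.comp ⟨σ, hσ⟩) = Λ g := by
    intro g
    obtain ⟨C, hC0, hC⟩ := exists_abs_bound g g.continuous
    have hdiff : Tendsto (fun n => ∫ x, g x ∂(ν n) - ∫ x, (g.comp ⟨σ, hσ⟩) x ∂(ν n))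
        (U : Filter ℕ) (𝓝 0) := by
      have hb : ∀ n, ‖∫ x, g x ∂(ν n) - ∫ x, (g.comp ⟨σ, hσ⟩) x ∂(ν n)‖ ≤ 2 * C * ε n := by
        intro n
        have he := integral_discMeas_comp σ (hε0 n) (hε1 n) (ω n) g g.continuous hσ
        have hIb : |∫ x, g (σ x) ∂(ν n)| ≤ C := by
          have h3 := norm_integral_le_of_norm_le_const (μ := ν n) (C := C)
            (Filter.Eventually.of_forall (fun x => by
              rw [Real.norm_eq_abs]; exact hC (σ x)))
          simpa [Real.norm_eq_abs, measure_univ] using h3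
        have hgb : |g (ω n)| ≤ C := hC _
        have hre : ∫ x, (g.comp ⟨σ, hσ⟩) x ∂(ν n) = ∫ x, g (σ x) ∂(ν n) := rfl
        rw [Real.norm_eq_abs, hre, he]
        have h4 : ε n * g (ω n) + (1 - ε n) * (∫ x, g (σ x) ∂(ν n))
            - ∫ x, g (σ x) ∂(ν n) = ε n * (g (ω n) - ∫ x, g (σ x) ∂(ν n)) := by ring
        rw [h4, abs_mul, abs_of_nonneg (hε0 n).le]
        have h5 : |g (ω n) - ∫ x, g (σ x) ∂(ν n)| ≤ 2 * C := by
          have h6 := abs_add_le (g (ω n)) (-(∫ x, g (σ x) ∂(ν n)))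
          rw [abs_neg] at h6
          have h7 : |g (ω n) + -(∫ x, g (σ x) ∂(ν n))| = |g (ω n) - ∫ x, g (σ x) ∂(ν n)| := by
            rw [sub_eq_add_neg]
          linarith
        calc ε n * |g (ω n) - ∫ x, g (σ x) ∂(ν n)| ≤ ε n * (2 * C) :=
              mul_le_mul_of_nonneg_left h5 (hε0 n).le
          _ = 2 * C * ε n := by ring
      refine squeeze_zero_norm hb ?_
      have h8 : Tendsto (fun n => 2 * C * ε n) atTop (𝓝 0) := by
        simpa using hεlim.const_mul (2 * C)
      exact h8.mono_left hUle
    have h9 := (hΛ g).sub (hΛ (g.comp ⟨σ, hσ⟩))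
    have h10 := tendsto_nhds_unique h9 hdiff
    linarith
  have hmap : Measure.map σ μ = μ := by
    haveI : IsProbabilityMeasure (Measure.map σ μ) :=
      Measure.isProbabilityMeasure_map hσ.measurable.aemeasurable
    refine ext_of_forall_lintegral_eq_of_IsFiniteMeasure (fun fb => ?_)
    set gc : C(Ω, ℝ) := ⟨fun x => (fb x : ℝ), NNReal.continuous_coe.comp fb.continuous⟩
      with hgc
    have hi1 : Integrable (fun x => ((fb x : ℝ))) (Measure.map σ μ) := by
      exact (BoundedContinuousFunction.mkOfCompact gc).integrable
        (μ := Measure.map σ μ)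
    have hi2 : Integrable (fun x => ((fb x : ℝ))) μ := by
      exact (BoundedContinuousFunction.mkOfCompact gc).integrable (μ := μ)
    rw [lintegral_coe_eq_integral _ hi1, lintegral_coe_eq_integral _ hi2]
    congr 1
    rw [integral_map hσ.measurable.aemeasurable
      (by exact gc.continuous.aestronglyMeasurable)]
    have e1 : ∫ x, ((fb (σ x) : ℝ)) ∂μ = Λ (gc.comp ⟨σ, hσ⟩) := hμrepr (gc.comp ⟨σ, hσ⟩)
    rw [e1, hinvΛ gc, ← hμrepr gc]
    rfl
  refine ⟨μ, U, ⟨hμprob, hmap⟩, fun g => ?_⟩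
  rw [hμrepr g]
  exact hΛ g

end Disc

theorem stmt14 [MetricSpace Ω] [CompactSpace Ω] [MeasurableSpace Ω] [BorelSpace Ω]
    (σ : Ω → Ω) (hσ : Continuous σ) (f : Ω → ℝ) (hf : Continuous f)
    (u : Ω → ℝ) (hu : Continuous u) (hfu : ∀ ω : Ω, f ω = u (σ ω) - u ω)
    (c : ℝ) (hbal : ∀ μ : Measure Ω, IsInvProb σ μ → ∫ x, u x ∂μ = c) :
    ∃ u₀ : Ω → ℝ,
      (Continuous u₀ ∧ (∀ ω : Ω, f ω = u₀ (σ ω) - u₀ ω) ∧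
        ∀ μ : Measure Ω, IsInvProb σ μ → ∫ x, u₀ x ∂μ = 0) ∧
      (∀ v : Ω → ℝ, Continuous v → (∀ ω : Ω, f ω = v (σ ω) - v ω) →
        (∀ μ : Measure Ω, IsInvProb σ μ → ∫ x, v x ∂μ = 0) → v = u₀) ∧
      TendstoUniformly (fun (ε : ℝ) => Udisc σ f ε) u₀ (𝓝[>] (0 : ℝ)) := by
  classical
  set u₀ : Ω → ℝ := fun x => u x - c with hu₀def
  have hu₀cont : Continuous u₀ := hu.sub continuous_const
  have hu₀cob : ∀ x : Ω, f x = u₀ (σ x) - u₀ x := by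
    intro x
    simp only [hu₀def]
    rw [hfu x]
    ring
  have hu₀int : ∀ μ : Measure Ω, IsInvProb σ μ → ∫ x, u₀ x ∂μ = 0 := by
    intro μ hμ
    haveI := hμ.1
    have hInt : Integrable u μ := by
      exact (BoundedContinuousFunction.mkOfCompact ⟨u, hu⟩).integrable (μ := μ)
    simp only [hu₀def]
    rw [integral_sub hInt (integrable_const c), hbal μ hμ, integral_const]
    simp
  refine ⟨u₀, ⟨hu₀cont, hu₀cob, hu₀int⟩, ?_, ?_⟩
  · -- uniqueness
    intro v hv hvcob hvint
    funext x₀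
    set w : Ω → ℝ := fun x => v x - u₀ x with hwdef
    have hwcont : Continuous w := hv.sub hu₀cont
    have hwinv : ∀ x, w (σ x) = w x := by
      intro x
      have h1 := hvcob x
      have h2 := hu₀cob x
      simp only [hwdef]
      linarith
    have hε0 : ∀ n : ℕ, 0 < 1 / ((n : ℝ) + 2) := fun n => by positivity
    have hε1 : ∀ n : ℕ, 1 / ((n : ℝ) + 2) < 1 := by
      intro n
      rw [div_lt_one (by positivity)]
      have : (0:ℝ) ≤ (n : ℝ) := Nat.cast_nonneg n
      linarith
    have hεlim : Tendsto (fun n : ℕ => 1 / ((n : ℝ) + 2)) atTop (𝓝 0) := by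
      simp only [one_div]
      exact tendsto_inv_atTop_zero.comp
        (tendsto_atTop_add_const_right atTop 2 tendsto_natCast_atTop_atTop)
    obtain ⟨μ, U, hμinv, hμtend⟩ := key_invariant_limit σ hσ _ hε0 hε1 hεlim (fun _ => x₀)
    haveI := hμinv.1
    set gw : C(Ω, ℝ) := ⟨w, hwcont⟩ with hgw
    have hwx₀ : w x₀ = ∫ x, gw x ∂μ := by
      refine tendsto_nhds_unique ?_ (hμtend gw)
      have hcn : ∀ n : ℕ, ∫ x, gw x ∂(discMeas σ (1 / ((n : ℝ) + 2)) x₀) = w x₀ :=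
        fun n => integral_discMeas_self σ (hε0 n) (hε1 n) x₀ w hwcont hwinv
      exact Filter.Tendsto.congr (fun n => (hcn n).symm) tendsto_const_nhds
    have hIv : Integrable v μ := by
      exact (BoundedContinuousFunction.mkOfCompact ⟨v, hv⟩).integrable (μ := μ)
    have hIu₀ : Integrable u₀ μ := by
      exact (BoundedContinuousFunction.mkOfCompact ⟨u₀, hu₀cont⟩).integrable (μ := μ)
    have hwμ : ∫ x, gw x ∂μ = 0 := by
      have : ∫ x, gw x ∂μ = ∫ x, (v x - u₀ x) ∂μ := rfl
      rw [this, integral_sub hIv hIu₀, hvint μ hμinv, hu₀int μ hμinv]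
      ring
    have : w x₀ = 0 := by rw [hwx₀, hwμ]
    have : v x₀ - u₀ x₀ = 0 := this
    linarith
  · -- uniform convergence
    rcases isEmpty_or_nonempty Ω with hΩ | hΩ
    · rw [Metric.tendstoUniformly_iff]
      intro δ hδ
      exact Filter.Eventually.of_forall (fun ε ω => (hΩ.false ω).elim)
    by_contra hnot
    rw [Metric.tendstoUniformly_iff] at hnot
    push_neg at hnot
    obtain ⟨δ₀, hδ₀, hfreq⟩ := hnot
    have hfreq' : ∃ᶠ ε in 𝓝[>] (0:ℝ), ∃ ω, δ₀ ≤ dist (u₀ ω) (Udisc σ f ε ω) := by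
      refine hfreq.mono (fun ε hε => ?_)
      obtain ⟨ω, hω⟩ := hε
      exact ⟨ω, hω⟩
    set l : Filter ℝ := (𝓝[>] (0:ℝ)) ⊓ Filter.principal
      {ε | ∃ ω, δ₀ ≤ dist (u₀ ω) (Udisc σ f ε ω)} with hl
    haveI hlne : l.NeBot := by
      rw [hl]
      exact Filter.inf_principal_neBot_iff.2 (fun V hV =>
        (Filter.frequently_iff.1 hfreq' hV).imp (fun x hx => ⟨hx.1, hx.2⟩))
    obtain ⟨ε, hε⟩ := l.exists_seq_tendsto
    have hε0' : Tendsto ε atTop (𝓝[>] (0:ℝ)) := hε.mono_right inf_le_left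
    have hεQ : ∀ᶠ n in atTop, ε n ∈ {e : ℝ | ∃ ω, δ₀ ≤ dist (u₀ ω) (Udisc σ f e ω)} :=
      Filter.tendsto_principal.1 (hε.mono_right inf_le_right)
    have hεIoo : ∀ᶠ n in atTop, ε n ∈ Set.Ioo (0:ℝ) 1 :=
      hε0' (Ioo_mem_nhdsGT_of_mem ⟨le_refl (0:ℝ), zero_lt_one⟩)
    obtain ⟨N, hN⟩ := Filter.eventually_atTop.1 (hεQ.and hεIoo)
    set ε' : ℕ → ℝ := fun n => ε (n + N) with hε'def
    have hQ' : ∀ n, ∃ ω, δ₀ ≤ dist (u₀ ω) (Udisc σ f (ε' n) ω) :=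
      fun n => (hN (n + N) (by omega)).1
    choose ω' hω' using hQ'
    have hε'0 : ∀ n, 0 < ε' n := fun n => (hN (n + N) (by omega)).2.1
    have hε'1 : ∀ n, ε' n < 1 := fun n => (hN (n + N) (by omega)).2.2
    have hε'lim : Tendsto ε' atTop (𝓝 0) := by
      have h1 : Tendsto ε atTop (𝓝 0) := hε0'.mono_right nhdsWithin_le_nhds
      exact h1.comp (tendsto_add_atTop_nat N)
    obtain ⟨μ, U, hμinv, hμtend⟩ := key_invariant_limit σ hσ ε' hε'0 hε'1 hε'lim ω'
    haveI := hμinv.1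
    set gc : C(Ω, ℝ) := ⟨fun x => u₀ (σ x), hu₀cont.comp hσ⟩ with hgc
    have hval : ∀ n, ∫ x, gc x ∂(discMeas σ (ε' n) (ω' n))
        = u₀ (ω' n) - Udisc σ f (ε' n) (ω' n) := by
      intro n
      have h1 := Udisc_eq_sub_integral σ (hε'0 n) (hε'1 n) (ω' n) f u₀ hu₀cont hσ hu₀cob
      have h2 : ∫ x, gc x ∂(discMeas σ (ε' n) (ω' n))
          = ∫ x, u₀ (σ x) ∂(discMeas σ (ε' n) (ω' n)) := rfl
      rw [h2]
      linarith
    have hlim2 := hμtend gc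
    have hIμ : ∫ x, gc x ∂μ = 0 := by
      have h1 : ∫ x, gc x ∂μ = ∫ x, u₀ x ∂μ := by
        have h2 : ∫ x, gc x ∂μ = ∫ x, u₀ (σ x) ∂μ := rfl
        rw [h2]
        calc ∫ x, u₀ (σ x) ∂μ = ∫ x, u₀ x ∂(Measure.map σ μ) :=
              (integral_map hσ.measurable.aemeasurable
                hu₀cont.aestronglyMeasurable).symm
          _ = ∫ x, u₀ x ∂μ := by rw [hμinv.2]
      rw [h1, hu₀int μ hμinv]
    have hge : δ₀ ≤ |∫ x, gc x ∂μ| := by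
      have habs : Tendsto (fun n => |∫ x, gc x ∂(discMeas σ (ε' n) (ω' n))|)
          (U : Filter ℕ) (𝓝 |∫ x, gc x ∂μ|) := hlim2.abs
      refine ge_of_tendsto habs (Filter.Eventually.of_forall (fun n => ?_))
      rw [hval n]
      have h3 := hω' n
      rwa [Real.dist_eq] at h3
    rw [hIμ] at hge
    simp only [abs_zero] at hge
    linarith
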